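/- For every positive integer k and every real x > k - 1, the reciprocal of the falling factorial x(x-1)⋯(x-k+1) admits the integral representation Γ(k)/(x(x-1)⋯(x-k+1)) = ∫₀^∞ (e^y - 1)^{k-1} e^{-yx} dy. -/

import Mathlib

open MeasureTheory

/-- Beta-integral representation of the reciprocal falling factorial:
for a positive integer `k` and real `x > k - 1`,
`Γ(k) / (x(x-1)⋯(x-k+1)) = ∫₀^∞ (e^y - 1)^(k-1) e^{-yx} dy`,
where `Γ(k) = (k-1)!`. -/
theorem stmt0 (k : ℕ) (hk : 1 ≤ k) (x : ℝ) (hx : (k : ℝ) - 1 < x) :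
    ((k - 1).factorial : ℝ) / (∏ i ∈ Finset.range k, (x - (i : ℝ))) =
      ∫ y in Set.Ioi (0 : ℝ), (Real.exp y - 1) ^ (k - 1) * Real.exp (-y * x) := by
  have hu0 : 0 < x - (k:ℝ) + 1 := by linarith
  -- Step 1: the Beta integral evaluation, transferred to a real integral on (0,1)
  have key : ∫ t in Set.Ioo (0:ℝ) 1, t ^ (x - k) * (1 - t) ^ (k - 1)
      = ((k - 1).factorial : ℝ) / (∏ i ∈ Finset.range k, (x - (i : ℝ))) := by
    have hure : 0 < Complex.re ((x - k + 1 : ℝ) : ℂ) := by simpa using hu0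
    have hbeta := Complex.betaIntegral_eval_nat_add_one_right hure (k - 1)
    rw [Nat.sub_add_cancel hk] at hbeta
    have hleft : Complex.betaIntegral ((x - k + 1 : ℝ) : ℂ) (((k-1:ℕ) : ℂ) + 1)
        = ((∫ t in Set.Ioo (0:ℝ) 1, t ^ (x - k) * (1 - t) ^ (k - 1) : ℝ) : ℂ) := by
      rw [Complex.betaIntegral, intervalIntegral.integral_of_le zero_le_one,
        MeasureTheory.integral_Ioc_eq_integral_Ioo]
      rw [show ∫ t in Set.Ioo (0:ℝ) 1,
            (t:ℂ) ^ (((x - k + 1 : ℝ):ℂ) - 1) * (1 - (t:ℂ)) ^ ((((k-1:ℕ)):ℂ) + 1 - 1)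
          = ∫ t in Set.Ioo (0:ℝ) 1, (((t ^ (x - k) * (1 - t) ^ (k - 1) : ℝ)):ℂ) from ?_]
      · exact integral_ofReal
      refine setIntegral_congr_fun measurableSet_Ioo (fun t ht => ?_)
      obtain ⟨ht0, ht1⟩ := ht
      have h1 : ((x - k + 1 : ℝ) : ℂ) - 1 = ((x - k : ℝ) : ℂ) := by push_cast; ring
      have h2 : (((k-1:ℕ) : ℂ) + 1) - 1 = ((k - 1 : ℕ) : ℂ) := by ring
      rw [h1, h2, Complex.cpow_natCast, ← Complex.ofReal_cpow ht0.le]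
      push_cast
      ring
    rw [hleft] at hbeta
    have hprod : ∀ j ∈ Finset.range k,
        ((x - k + 1 : ℝ) : ℂ) + (j : ℕ) = ((x - k + 1 + j : ℝ) : ℂ) := by
      intro j _; push_cast; ring
    rw [Finset.prod_congr rfl hprod, show ∏ j ∈ Finset.range k, ((x - k + 1 + j : ℝ) : ℂ)
        = ((∏ j ∈ Finset.range k, (x - k + 1 + j) : ℝ) : ℂ) by push_cast; ring,
      show ((k-1).factorial : ℂ) = (((k-1).factorial : ℝ) : ℂ) by push_cast; ring,
      ← Complex.ofReal_div] at hbeta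
    rw [Complex.ofReal_injective hbeta]
    congr 1
    rw [← Finset.prod_range_reflect]
    refine Finset.prod_congr rfl fun j hj => ?_
    rw [Finset.mem_range] at hj
    have : ((k - 1 - j : ℕ) : ℝ) = (k : ℝ) - 1 - j := by
      rw [Nat.cast_sub (by omega), Nat.cast_sub hk, Nat.cast_one]
    rw [this]; ring
  -- Step 2: change of variables t = exp (-y)
  have himg : (fun y => Real.exp (-y)) '' Set.Ioi 0 = Set.Ioo (0:ℝ) 1 := by
    ext t
    constructor
    · rintro ⟨y, hy, rfl⟩
      have hy : (0:ℝ) < y := hy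
      exact ⟨Real.exp_pos _, Real.exp_lt_one_iff.mpr (by linarith)⟩
    · rintro ⟨ht0, ht1⟩
      exact ⟨-Real.log t, by simpa using Real.log_neg ht0 ht1, by simp [Real.exp_log ht0]⟩
  have hderiv : ∀ y ∈ Set.Ioi (0:ℝ), HasDerivWithinAt (fun y => Real.exp (-y))
      (-Real.exp (-y)) (Set.Ioi 0) y := by
    intro y _
    have h := (hasDerivAt_neg y).exp
    rw [mul_neg_one] at h
    exact h.hasDerivWithinAt
  have hinj : Set.InjOn (fun y => Real.exp (-y)) (Set.Ioi 0) :=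
    (Real.exp_injective.comp neg_injective).injOn
  have hcov : ∫ t in Set.Ioo (0:ℝ) 1, t ^ (x - k) * (1 - t) ^ (k - 1)
      = ∫ y in Set.Ioi (0:ℝ), (Real.exp y - 1) ^ (k - 1) * Real.exp (-y * x) := by
    rw [← himg, integral_image_eq_integral_abs_deriv_smul measurableSet_Ioi hderiv hinj
      (fun t => t ^ (x - k) * (1 - t) ^ (k - 1))]
    refine setIntegral_congr_fun measurableSet_Ioi (fun y hy => ?_)
    have hy : (0:ℝ) < y := hy
    simp only [smul_eq_mul, abs_neg, abs_of_pos (Real.exp_pos _)]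
    have h1 : Real.exp (-y) ^ (x - (k:ℝ)) = Real.exp (-y * (x - k)) := by
      rw [Real.rpow_def_of_pos (Real.exp_pos _), Real.log_exp]
    rw [h1]
    have h : Real.exp y - 1 = Real.exp y * (1 - Real.exp (-y)) := by
      rw [mul_sub, ← Real.exp_add]; simp
    rw [h, mul_pow, ← Real.exp_nat_mul, Nat.cast_sub hk, Nat.cast_one]
    have e1 : Real.exp (-y) * Real.exp (-y * (x - k))
        = Real.exp (((k:ℝ)-1) * y) * Real.exp (-y * x) := by
      rw [← Real.exp_add, ← Real.exp_add]; ring_nf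
    calc Real.exp (-y) * (Real.exp (-y * (x - k)) * (1 - Real.exp (-y)) ^ (k-1))
        = (Real.exp (-y) * Real.exp (-y * (x - k))) * (1 - Real.exp (-y)) ^ (k-1) := by ring
      _ = (Real.exp (((k:ℝ)-1) * y) * Real.exp (-y * x)) * (1 - Real.exp (-y)) ^ (k-1) := by
          rw [e1]
      _ = _ := by ring
  rw [← hcov, key]
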